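/- Let $a \in \R^{n\times n}$ with decreasing rearrangement $s(1)\ge\dots\ge s(n^2)$ of $(|a_{ij}|)$ and let $G = \{1,\dots,n\}^{\{1,\dots,n\}}$ be the set of all maps from $\{1,\dots,n\}$ to itself. Then for every $\ell \le n$, $\frac{1}{288}\cdot\frac{1}{n}\sum_{j=1}^{\ell n}s(j) \le \frac{1}{n^n}\sum_{g\in G}\sum_{k=1}^{\ell}\kmax_{1\le i\le n}|a_{ig(i)}| \le 2\cdot\frac{1}{n}\sum_{j=1}^{\ell n}s(j)$. -/

import Mathlib

section AuxLemmas

lemma card_filter_univ_fin (n : ℕ) (q : Fin n → Bool) :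
    (Finset.univ.filter (fun i => q i = true)).card = (List.finRange n).countP q := by
  rw [Fin.univ_def]
  simp [Finset.filter, Finset.card, List.countP_eq_length_filter]

lemma countP_eq_card_filter {α : Type*} (l : List α) (p : α → Bool) :
    l.countP p = (Finset.univ.filter (fun i : Fin l.length => p (l.get i) = true)).card := by
  rw [card_filter_univ_fin]
  conv_lhs => rw [← List.ofFn_get l, List.ofFn_eq_map, List.countP_map]
  congr 1

lemma downclosed_mem_iff {n : ℕ} (S : Finset (Fin n))
    (h : ∀ i j : Fin n, i ≤ j → j ∈ S → i ∈ S) (k : Fin n) :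
    k ∈ S ↔ (k : ℕ) < S.card := by
  constructor
  · intro hk
    have hsub : Finset.Iic k ⊆ S := fun i hi => h i k (Finset.mem_Iic.1 hi) hk
    have := Finset.card_le_card hsub
    rwa [Fin.card_Iic, Nat.add_one_le_iff] at this
  · intro hc
    by_contra hk
    have hsub : S ⊆ Finset.Iio k := by
      intro i hi
      rw [Finset.mem_Iio]
      by_contra hik
      exact hk (h k i (le_of_not_gt hik) hi)
    have := Finset.card_le_card hsub
    rw [Fin.card_Iio] at this
    omega

lemma sum_ind_min (ℓ c : ℕ) :
    ∑ k ∈ Finset.range ℓ, (if k < c then (1:ℝ) else 0) = min (ℓ:ℝ) (c:ℝ) := by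
  rw [Finset.sum_boole]
  have : (Finset.range ℓ).filter (fun k => k < c) = Finset.range (min ℓ c) := by
    ext x; simp [Nat.lt_min]
  rw [this, Finset.card_range, Nat.cast_min]
lemma sorted_le_getD_iff (l : List ℝ) (hs : List.Pairwise (fun a b : ℝ => b ≤ a) l)
    (k : ℕ) (hk : k < l.length) (t : ℝ) :
    t ≤ l.getD k 0 ↔ k < l.countP (fun x => decide (t ≤ x)) := by
  rw [countP_eq_card_filter, (List.getD_eq_get l 0 ⟨k, hk⟩ : l.getD k 0 = l.get ⟨k, hk⟩)]
  have hmono : ∀ i j : Fin l.length, i ≤ j → l.get j ≤ l.get i := by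
    intro i j hij
    rcases eq_or_lt_of_le hij with h | h
    · rw [h]
    · exact List.pairwise_iff_get.1 hs i j h
  have := downclosed_mem_iff
    (Finset.univ.filter (fun i : Fin l.length => decide (t ≤ l.get i) = true))
    (by
      intro i j hij hj
      simp only [Finset.mem_filter, Finset.mem_univ, true_and, decide_eq_true_iff] at *
      exact le_trans hj (hmono i j hij))
    ⟨k, hk⟩
  simp only [decide_eq_true_iff] at *
  simpa using this

lemma getD_nonneg (l : List ℝ) (hnn : ∀ x ∈ l, 0 ≤ x) (k : ℕ) : 0 ≤ l.getD k 0 := by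
  by_cases hk : k < l.length
  · rw [(List.getD_eq_get l 0 ⟨k, hk⟩ : l.getD k 0 = l.get ⟨k, hk⟩)]; exact hnn _ (l.get_mem _)
  · rw [List.getD_eq_default _ _ (le_of_not_gt hk)]

lemma getD_mem (l : List ℝ) (k : ℕ) (hk : k < l.length) : l.getD k 0 ∈ l := by
  rw [(List.getD_eq_get l 0 ⟨k, hk⟩ : l.getD k 0 = l.get ⟨k, hk⟩)]; exact l.get_mem _

lemma getD_succ_le (l : List ℝ) (h : List.Pairwise (fun a b : ℝ => b ≤ a) l)
    (hnn : ∀ x ∈ l, 0 ≤ x) (k : ℕ) : l.getD (k+1) 0 ≤ l.getD k 0 := by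
  by_cases hk : k + 1 < l.length
  · rw [(List.getD_eq_get l 0 ⟨k+1, hk⟩ : l.getD (k+1) 0 = l.get ⟨k+1, hk⟩), (List.getD_eq_get l 0 ⟨k, by omega⟩ : l.getD k 0 = l.get ⟨k, by omega⟩)]
    exact List.pairwise_iff_get.1 h ⟨k, by omega⟩ ⟨k+1, hk⟩ (by simp)
  · rw [List.getD_eq_default _ _ (le_of_not_gt hk)]
    exact getD_nonneg l hnn k

lemma getD_anti (l : List ℝ) (h : List.Pairwise (fun a b : ℝ => b ≤ a) l)
    (hnn : ∀ x ∈ l, 0 ≤ x) : Antitone (fun k => l.getD k 0) :=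
  antitone_nat_of_succ_le (fun k => getD_succ_le l h hnn k)

lemma telescope (l : List ℝ) (h : List.Pairwise (fun a b : ℝ => b ≤ a) l)
    (hnn : ∀ x ∈ l, 0 ≤ x) (v : ℝ) (j : ℕ) (hj : j < l.length) (hv : v = l.getD j 0) :
    v = ∑ m ∈ Finset.range l.length,
      (if l.getD m 0 ≤ v then (l.getD m 0 - l.getD (m+1) 0) else 0) := by
  have hex : ∃ m, l.getD m 0 ≤ v := ⟨j, le_of_eq hv.symm⟩
  set j0 := Nat.find hex with hj0
  have hPj0 : l.getD j0 0 ≤ v := Nat.find_spec hex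
  have hanti := getD_anti l h hnn
  have hiff : ∀ m, (l.getD m 0 ≤ v ↔ j0 ≤ m) := by
    intro m
    constructor
    · intro hm; exact Nat.find_min' hex hm
    · intro hm; exact le_trans (hanti hm) hPj0
  have hvj0 : v = l.getD j0 0 := by
    have h1 : j0 ≤ j := Nat.find_min' hex (le_of_eq hv.symm)
    exact le_antisymm (hv ▸ hanti h1) hPj0
  have hj0len : j0 ≤ l.length := le_trans (Nat.find_min' hex (le_of_eq hv.symm)) (le_of_lt hj)
  calc v = ∑ m ∈ Finset.Ico j0 l.length, (l.getD m 0 - l.getD (m+1) 0) := by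
        rw [Finset.sum_Ico_eq_sum_range]
        have := Finset.sum_range_sub' (fun i => l.getD (j0 + i) 0) (l.length - j0)
        simp only [Nat.add_zero] at this
        rw [show (∑ k ∈ Finset.range (l.length - j0), (l.getD (j0 + k) 0 - l.getD (j0 + k + 1) 0)) = ∑ i ∈ Finset.range (l.length - j0), ((fun i => l.getD (j0 + i) 0) i - (fun i => l.getD (j0 + i) 0) (i+1)) from by
          apply Finset.sum_congr rfl; intro i _; ring_nf, this]
        rw [Nat.add_sub_cancel' hj0len]
        rw [List.getD_eq_default _ _ (le_refl _), sub_zero]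
        exact hvj0
    _ = ∑ m ∈ Finset.range l.length,
      (if l.getD m 0 ≤ v then (l.getD m 0 - l.getD (m+1) 0) else 0) := by
        rw [← Finset.sum_filter]
        apply Finset.sum_congr
        · ext m
          simp only [Finset.mem_Ico, Finset.mem_filter, Finset.mem_range, hiff m]
          omega
        · intro m _; rfl

lemma sum_g_prod {n : ℕ} (h : Fin n → Fin n → ℝ) :
    ∑ g : Fin n → Fin n, ∏ i, h i (g i) = ∏ i, ∑ j, h i j := by
  rw [Finset.prod_univ_sum, Fintype.piFinset_univ]

lemma sum_g_single {n : ℕ} (i : Fin n) (F : Fin n → ℝ) :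
    ∑ g : Fin n → Fin n, F (g i) = (n:ℝ)^(n-1) * ∑ j, F j := by
  have h1 : ∀ g : Fin n → Fin n, F (g i) = ∏ k, (if k = i then F (g k) else 1) := by
    intro g; rw [Finset.prod_ite_eq']; simp
  rw [Finset.sum_congr rfl (fun g _ => h1 g), sum_g_prod (fun k x => if k = i then F x else 1)]
  have h2 : ∀ k : Fin n, (∑ j, if k = i then F j else (1:ℝ)) = if k = i then ∑ j, F j else n := by
    intro k; by_cases hk : k = i <;> simp [hk]
  rw [Finset.prod_congr rfl (fun k _ => h2 k)]
  rw [← Finset.mul_prod_erase Finset.univ _ (Finset.mem_univ i), if_pos rfl]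
  rw [Finset.prod_congr rfl (fun k hk => if_neg (Finset.ne_of_mem_erase hk)),
    Finset.prod_const, Finset.card_erase_of_mem (Finset.mem_univ i), Finset.card_univ,
    Fintype.card_fin, mul_comm]

lemma sum_g_cross {n : ℕ} (i i' : Fin n) (hne : i ≠ i') (F F' : Fin n → ℝ)
    (hF : ∑ j, F j = 0) :
    ∑ g : Fin n → Fin n, F (g i) * F' (g i') = 0 := by
  have h1 : ∀ g : Fin n → Fin n, F (g i) * F' (g i')
      = ∏ k, ((if k = i then F (g k) else 1) * (if k = i' then F' (g k) else 1)) := by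
    intro g
    rw [Finset.prod_mul_distrib, Finset.prod_ite_eq', Finset.prod_ite_eq']
    simp
  rw [Finset.sum_congr rfl (fun g _ => h1 g), sum_g_prod (fun k x => (if k = i then F x else 1) * (if k = i' then F' x else 1))]
  apply Finset.prod_eq_zero (Finset.mem_univ i)
  have : ∀ j : Fin n, ((if i = i then F j else 1) * (if i = i' then F' j else 1)) = F j := by
    intro j; rw [if_pos rfl, if_neg hne, mul_one]
  rw [Finset.sum_congr rfl (fun j _ => this j), hF]
section core
variable {n : ℕ} (S : Fin n → Finset (Fin n))

noncomputable def NN (S : Fin n → Finset (Fin n)) (g : Fin n → Fin n) : ℝ :=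
  ∑ i, if g i ∈ S i then (1:ℝ) else 0

noncomputable def mu (S : Fin n → Finset (Fin n)) : ℝ := (∑ i, ((S i).card : ℝ)) / n

lemma NN_nonneg (g) : 0 ≤ NN S g :=
  Finset.sum_nonneg (fun i _ => by positivity)

lemma card_fun : (Finset.univ : Finset (Fin n → Fin n)).card = n^n := by
  simp [Fintype.card_fun]

lemma sum_chi (i : Fin n) : (∑ j, if j ∈ S i then (1:ℝ) else 0) = ((S i).card : ℝ) := by
  rw [Finset.sum_boole]
  congr 1
  simp

lemma sum_g_NN (hn : 0 < n) : ∑ g : Fin n → Fin n, NN S g = (n:ℝ)^n * mu S := by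
  unfold NN mu
  rw [Finset.sum_comm]
  rw [Finset.sum_congr rfl (fun i _ => sum_g_single i (fun x => if x ∈ S i then (1:ℝ) else 0))]
  rw [Finset.sum_congr rfl (fun i (_ : i ∈ Finset.univ) => by rw [sum_chi S i]), ← Finset.mul_sum]
  have hne : (n:ℝ) ≠ 0 := Nat.cast_ne_zero.2 hn.ne'
  rw [mul_div_assoc']
  rw [eq_div_iff hne]
  rw [show (n:ℝ)^n = (n:ℝ)^(n-1) * (n:ℝ) from by rw [← pow_succ]; congr 1; omega]
  ring

lemma var_bound (hn : 0 < n) :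
    ∑ g : Fin n → Fin n, (NN S g - mu S)^2 ≤ (n:ℝ)^n * mu S := by
  have hne : (n:ℝ) ≠ 0 := Nat.cast_ne_zero.2 hn.ne'
  set d : Fin n → Fin n → ℝ :=
    fun i x => (if x ∈ S i then (1:ℝ) else 0) - ((S i).card : ℝ)/n with hd
  have hdsum : ∀ i, ∑ j, d i j = 0 := by
    intro i
    rw [Finset.sum_sub_distrib, sum_chi, Finset.sum_const, Finset.card_univ, Fintype.card_fin]
    rw [nsmul_eq_mul, mul_div_cancel₀ _ hne, sub_self]
  have hNd : ∀ g, NN S g - mu S = ∑ i, d i (g i) := by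
    intro g
    unfold NN mu
    rw [Finset.sum_div, ← Finset.sum_sub_distrib]
  have step1 : ∑ g : Fin n → Fin n, (NN S g - mu S)^2
      = ∑ i, ∑ i', ∑ g : Fin n → Fin n, d i (g i) * d i' (g i') := by
    have h1 : ∑ g : Fin n → Fin n, (NN S g - mu S)^2
        = ∑ g : Fin n → Fin n, ∑ i, ∑ i', d i (g i) * d i' (g i') :=
      Finset.sum_congr rfl (fun g _ => by rw [hNd g, sq, Finset.sum_mul_sum])
    rw [h1, Finset.sum_comm]
    exact Finset.sum_congr rfl (fun i _ => Finset.sum_comm)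
  have step2 : ∀ i : Fin n, (∑ i', ∑ g : Fin n → Fin n, d i (g i) * d i' (g i'))
      = (n:ℝ)^(n-1) * ∑ j, d i j * d i j := by
    intro i
    rw [Finset.sum_eq_single i
      (fun i' _ hne' => sum_g_cross i i' (Ne.symm hne') (d i) (d i') (hdsum i))
      (fun h => absurd (Finset.mem_univ i) h)]
    exact sum_g_single i (fun x => d i x * d i x)
  have step3 : ∀ i : Fin n, (∑ j, d i j * d i j) ≤ ((S i).card : ℝ) := by
    intro i
    set c : ℝ := ((S i).card : ℝ) with hc
    have hcnn : 0 ≤ c := by positivity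
    have hpt : ∀ j, d i j * d i j
        = (if j ∈ S i then (1:ℝ) else 0) - 2*(c/n)*(if j ∈ S i then (1:ℝ) else 0) + (c/n)^2 := by
      intro j; by_cases h : j ∈ S i <;> simp [hd, h] <;> ring
    rw [Finset.sum_congr rfl (fun j _ => hpt j), Finset.sum_add_distrib,
      Finset.sum_sub_distrib, sum_chi, ← Finset.mul_sum, sum_chi,
      Finset.sum_const, Finset.card_univ, Fintype.card_fin, nsmul_eq_mul]
    have : c - 2*(c/n)*c + n*(c/n)^2 = c - c^2/n := by field_simp; ring
    rw [this]
    have : 0 ≤ c^2/n := by positivity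
    linarith
  calc ∑ g : Fin n → Fin n, (NN S g - mu S)^2
      = ∑ i, (n:ℝ)^(n-1) * ∑ j, d i j * d i j := by
        rw [step1]; exact Finset.sum_congr rfl (fun i _ => step2 i)
    _ ≤ ∑ i, (n:ℝ)^(n-1) * ((S i).card : ℝ) := by
        apply Finset.sum_le_sum
        intro i _
        exact mul_le_mul_of_nonneg_left (step3 i) (by positivity)
    _ = (n:ℝ)^n * mu S := by
        rw [← Finset.mul_sum]
        unfold mu
        rw [mul_div_assoc']
        rw [eq_div_iff hne]
        rw [show (n:ℝ)^n = (n:ℝ)^(n-1) * (n:ℝ) from by rw [← pow_succ]; congr 1; omega]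
        ring

lemma mu_nonneg : 0 ≤ mu S := by
  unfold mu; positivity

lemma core_upper (hn : 0 < n) (ℓ : ℕ) :
    ∑ g : Fin n → Fin n, min (ℓ:ℝ) (NN S g) ≤ min (ℓ:ℝ) (mu S) * (n:ℝ)^n := by
  have hpow : (0:ℝ) ≤ (n:ℝ)^n := by positivity
  rw [min_mul_of_nonneg _ _ hpow]
  apply le_min
  · calc ∑ g : Fin n → Fin n, min (ℓ:ℝ) (NN S g) ≤ ∑ g : Fin n → Fin n, (ℓ:ℝ) :=
        Finset.sum_le_sum (fun g _ => min_le_left _ _)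
      _ = (ℓ:ℝ) * (n:ℝ)^n := by
        rw [Finset.sum_const, card_fun, nsmul_eq_mul, Nat.cast_pow, mul_comm]
  · calc ∑ g : Fin n → Fin n, min (ℓ:ℝ) (NN S g) ≤ ∑ g : Fin n → Fin n, NN S g :=
        Finset.sum_le_sum (fun g _ => min_le_right _ _)
      _ = mu S * (n:ℝ)^n := by rw [sum_g_NN S hn, mul_comm]

lemma core_lower (hn : 0 < n) (ℓ : ℕ) (hℓ : 1 ≤ ℓ) :
    (1/16) * min (ℓ:ℝ) (mu S) * (n:ℝ)^n ≤ ∑ g : Fin n → Fin n, min (ℓ:ℝ) (NN S g) := by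
  have hne : (n:ℝ) ≠ 0 := Nat.cast_ne_zero.2 hn.ne'
  have hpow : (0:ℝ) < (n:ℝ)^n := by positivity
  have hμ0 : 0 ≤ mu S := mu_nonneg S
  have hℓ0 : (0:ℝ) ≤ (ℓ:ℝ) := by positivity
  have hmin0 : 0 ≤ min (ℓ:ℝ) (mu S) := le_min hℓ0 hμ0
  have hminμ : min (ℓ:ℝ) (mu S) ≤ mu S := min_le_right _ _
  by_cases hμ8 : mu S ≤ 8
  · -- small μ case : use P(N ≥ 1) ≥ 1 - exp (-μ)
    have key : ∀ g : Fin n → Fin n,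
        (1:ℝ) - (∏ i, (1 - if g i ∈ S i then (1:ℝ) else 0)) ≤ min (ℓ:ℝ) (NN S g) := by
      intro g
      by_cases hg : ∃ i, g i ∈ S i
      · obtain ⟨i0, hi0⟩ := hg
        have hprod : (∏ i, (1 - if g i ∈ S i then (1:ℝ) else 0)) = 0 :=
          Finset.prod_eq_zero (Finset.mem_univ i0) (by rw [if_pos hi0]; ring)
        rw [hprod, sub_zero]
        apply le_min
        · exact_mod_cast Nat.one_le_cast.2 hℓ
        · calc (1:ℝ) = (if g i0 ∈ S i0 then (1:ℝ) else 0) := by rw [if_pos hi0]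
            _ ≤ NN S g := Finset.single_le_sum (f := fun i => if g i ∈ S i then (1:ℝ) else 0)
                (fun i _ => by positivity) (Finset.mem_univ i0)
      · push_neg at hg
        have hprod : (∏ i, (1 - if g i ∈ S i then (1:ℝ) else 0)) = 1 :=
          Finset.prod_eq_one (fun i _ => by rw [if_neg (hg i)]; ring)
        have hN : NN S g = 0 := Finset.sum_eq_zero (fun i _ => if_neg (hg i))
        rw [hprod, hN, sub_self]
        exact le_min hℓ0 le_rfl
    have hsum : (n:ℝ)^n - (∏ i, ((n:ℝ) - ((S i).card:ℝ)))
        ≤ ∑ g : Fin n → Fin n, min (ℓ:ℝ) (NN S g) := by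
      calc (n:ℝ)^n - (∏ i, ((n:ℝ) - ((S i).card:ℝ)))
          = ∑ g : Fin n → Fin n, ((1:ℝ) - ∏ i, (1 - if g i ∈ S i then (1:ℝ) else 0)) := by
            rw [Finset.sum_sub_distrib, Finset.sum_const, card_fun, nsmul_eq_mul, mul_one,
              Nat.cast_pow, sum_g_prod (fun i x => 1 - if x ∈ S i then (1:ℝ) else 0)]
            congr 1
            apply Finset.prod_congr rfl
            intro i _
            rw [Finset.sum_sub_distrib, sum_chi, Finset.sum_const, Finset.card_univ,
              Fintype.card_fin, nsmul_eq_mul, mul_one]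
        _ ≤ _ := Finset.sum_le_sum (fun g _ => key g)
    have hprod_le : (∏ i, ((n:ℝ) - ((S i).card:ℝ))) ≤ (n:ℝ)^n * Real.exp (-(mu S)) := by
      have h1 : ∀ i : Fin n, (n:ℝ) - ((S i).card:ℝ) = (n:ℝ) * (1 - ((S i).card:ℝ)/n) := by
        intro i; field_simp
      rw [Finset.prod_congr rfl (fun i _ => h1 i), Finset.prod_mul_distrib, Finset.prod_const,
        Finset.card_univ, Fintype.card_fin]
      apply mul_le_mul_of_nonneg_left _ (by positivity)
      calc ∏ i, (1 - ((S i).card:ℝ)/n) ≤ ∏ i, Real.exp (-(((S i).card:ℝ)/n)) := by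
            apply Finset.prod_le_prod
            · intro i _
              have h2 : ((S i).card:ℝ) ≤ n := by
                exact_mod_cast (S i).card_le_univ.trans_eq (by simp)
              have : ((S i).card:ℝ)/n ≤ 1 := by
                rw [div_le_one (by exact_mod_cast hn)]; exact h2
              linarith
            · intro i _
              have := Real.add_one_le_exp (-(((S i).card:ℝ)/n))
              linarith
        _ = Real.exp (-(mu S)) := by
            rw [← Real.exp_sum]
            congr 1
            unfold mu
            rw [Finset.sum_div, ← Finset.sum_neg_distrib]
    have hexp : Real.exp (-(mu S)) ≤ 1/(1 + mu S) := by
      rw [Real.exp_neg]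
      rw [inv_eq_one_div]
      apply one_div_le_one_div_of_le (by linarith)
      linarith [Real.add_one_le_exp (mu S)]
    -- combine
    have hfinal : (n:ℝ)^n * (mu S / (1 + mu S)) ≤ ∑ g : Fin n → Fin n, min (ℓ:ℝ) (NN S g) := by
      have : (n:ℝ)^n * (mu S / (1 + mu S)) = (n:ℝ)^n - (n:ℝ)^n * (1/(1 + mu S)) := by
        field_simp
        ring
      rw [this]
      have := mul_le_mul_of_nonneg_left hexp (le_of_lt hpow)
      linarith [hsum, hprod_le]
    apply le_trans _ hfinal
    rw [mul_comm ((1:ℝ)/16 * min (ℓ:ℝ) (mu S)) ((n:ℝ)^n)]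
    apply mul_le_mul_of_nonneg_left _ (le_of_lt hpow)
    have hinv : (1:ℝ)/16 ≤ 1/(1 + mu S) :=
      one_div_le_one_div_of_le (by linarith) (by linarith)
    calc (1:ℝ)/16 * min (ℓ:ℝ) (mu S) ≤ 1/16 * mu S := by
          apply mul_le_mul_of_nonneg_left hminμ (by norm_num)
      _ = mu S * (1/16) := by ring
      _ ≤ mu S * (1/(1 + mu S)) := mul_le_mul_of_nonneg_left hinv hμ0
      _ = mu S / (1 + mu S) := by ring
  · -- large μ case : Chebyshev
    push_neg at hμ8
    have hμpos : 0 < mu S := by linarith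
    have hpt : ∀ g : Fin n → Fin n,
        min (ℓ:ℝ) (mu S / 2) * (1 - 4*(NN S g - mu S)^2/(mu S)^2) ≤ min (ℓ:ℝ) (NN S g) := by
      intro g
      have hN0 : 0 ≤ NN S g := NN_nonneg S g
      have hm2 : 0 ≤ min (ℓ:ℝ) (mu S / 2) := le_min hℓ0 (by linarith)
      by_cases hc : mu S / 2 ≤ NN S g
      · calc min (ℓ:ℝ) (mu S / 2) * (1 - 4*(NN S g - mu S)^2/(mu S)^2)
            ≤ min (ℓ:ℝ) (mu S / 2) * 1 := by
              apply mul_le_mul_of_nonneg_left _ hm2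
              have : 0 ≤ 4*(NN S g - mu S)^2/(mu S)^2 := by positivity
              linarith
          _ = min (ℓ:ℝ) (mu S / 2) := mul_one _
          _ ≤ min (ℓ:ℝ) (NN S g) := min_le_min le_rfl hc
      · push_neg at hc
        have h1 : (mu S/2)^2 ≤ (NN S g - mu S)^2 := by nlinarith
        have h2 : 1 - 4*(NN S g - mu S)^2/(mu S)^2 ≤ 0 := by
          rw [sub_nonpos, le_div_iff₀ (by positivity)]
          nlinarith
        calc min (ℓ:ℝ) (mu S / 2) * (1 - 4*(NN S g - mu S)^2/(mu S)^2) ≤ 0 :=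
              mul_nonpos_of_nonneg_of_nonpos hm2 h2
          _ ≤ min (ℓ:ℝ) (NN S g) := le_min hℓ0 hN0
    have hvar := var_bound S hn
    have hsum : min (ℓ:ℝ) (mu S / 2) * ((n:ℝ)^n - 4*((n:ℝ)^n * mu S)/(mu S)^2)
        ≤ ∑ g : Fin n → Fin n, min (ℓ:ℝ) (NN S g) := by
      have hm2 : 0 ≤ min (ℓ:ℝ) (mu S / 2) := le_min hℓ0 (by linarith)
      calc min (ℓ:ℝ) (mu S / 2) * ((n:ℝ)^n - 4*((n:ℝ)^n * mu S)/(mu S)^2)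
          ≤ min (ℓ:ℝ) (mu S / 2) * ((n:ℝ)^n - 4*(∑ g : Fin n → Fin n, (NN S g - mu S)^2)/(mu S)^2) := by
            apply mul_le_mul_of_nonneg_left _ hm2
            have hc : (0:ℝ) ≤ 4/(mu S)^2 := by positivity
            have : (4/(mu S)^2) * (∑ g : Fin n → Fin n, (NN S g - mu S)^2)
                ≤ (4/(mu S)^2) * ((n:ℝ)^n * mu S) := mul_le_mul_of_nonneg_left hvar hc
            have e1 : (4/(mu S)^2) * (∑ g : Fin n → Fin n, (NN S g - mu S)^2)
                = 4*(∑ g : Fin n → Fin n, (NN S g - mu S)^2)/(mu S)^2 := by ring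
            have e2 : (4/(mu S)^2) * ((n:ℝ)^n * mu S) = 4*((n:ℝ)^n * mu S)/(mu S)^2 := by ring
            linarith [e1 ▸ e2 ▸ this]
        _ = ∑ g : Fin n → Fin n, min (ℓ:ℝ) (mu S / 2) * (1 - 4*(NN S g - mu S)^2/(mu S)^2) := by
            rw [← Finset.mul_sum]
            congr 1
            rw [Finset.sum_sub_distrib, Finset.sum_const, card_fun, nsmul_eq_mul, mul_one,
              Nat.cast_pow, ← Finset.sum_div, ← Finset.mul_sum]
        _ ≤ _ := Finset.sum_le_sum (fun g _ => hpt g)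
    apply le_trans _ hsum
    have h1 : (n:ℝ)^n - 4*((n:ℝ)^n * mu S)/(mu S)^2 = (n:ℝ)^n * (1 - 4/(mu S)) := by
      field_simp
    rw [h1]
    have h2 : (1:ℝ)/2 ≤ 1 - 4/(mu S) := by
      have h4 : 4/(mu S) ≤ 1/2 := by
        rw [div_le_div_iff₀ hμpos (by norm_num)]
        linarith
      linarith
    have h3 : min (ℓ:ℝ) (mu S)/2 ≤ min (ℓ:ℝ) (mu S / 2) := by
      apply le_min
      · linarith [min_le_left (ℓ:ℝ) (mu S)]
      · linarith [min_le_right (ℓ:ℝ) (mu S)]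
    have hm2' : 0 ≤ min (ℓ:ℝ) (mu S/2) := le_min hℓ0 (by linarith)
    calc (1/16) * min (ℓ:ℝ) (mu S) * (n:ℝ)^n
        ≤ (min (ℓ:ℝ) (mu S)/2) * ((n:ℝ)^n * (1/2)) := by
          nlinarith [mul_nonneg hmin0 hpow.le]
      _ ≤ min (ℓ:ℝ) (mu S / 2) * ((n:ℝ)^n * (1 - 4/(mu S))) := by
          apply mul_le_mul h3 (mul_le_mul_of_nonneg_left h2 hpow.le) (by positivity) hm2'

end core

lemma countP_toList {α : Type*} (s : Finset α) (q : α → Prop) [DecidablePred q] :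
    s.toList.countP (fun x => decide (q x)) = (s.filter q).card := by
  rw [← Multiset.coe_countP, Finset.coe_toList]
  rw [Multiset.countP_eq_card_filter]
  rfl
lemma restructure (sL : List ℝ) (hsort : sL.Pairwise (fun x y : ℝ => y ≤ x))
    (hnn : ∀ x ∈ sL, 0 ≤ x)
    (sY : List ℝ) (hsortY : sY.Pairwise (fun x y : ℝ => y ≤ x))
    (hsub : ∀ x ∈ sY, x ∈ sL)
    (ℓ : ℕ) (hℓ : ℓ ≤ sY.length) :
    ∑ k ∈ Finset.range ℓ, sY.getD k 0
      = ∑ m ∈ Finset.range sL.length, (sL.getD m 0 - sL.getD (m+1) 0) *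
          min (ℓ:ℝ) ((sY.countP (fun x => decide (sL.getD m 0 ≤ x)) : ℕ) : ℝ) := by
  have step_k : ∀ k ∈ Finset.range ℓ, sY.getD k 0
      = ∑ m ∈ Finset.range sL.length,
          (if sL.getD m 0 ≤ sY.getD k 0 then (sL.getD m 0 - sL.getD (m+1) 0) else 0) := by
    intro k hk
    have hkY : k < sY.length := lt_of_lt_of_le (Finset.mem_range.1 hk) hℓ
    have hmem : sY.getD k 0 ∈ sL := hsub _ (getD_mem sY k hkY)
    obtain ⟨idx, hidx⟩ := List.mem_iff_get.1 hmem
    exact telescope sL hsort hnn _ idx.1 idx.2 (by rw [List.getD_eq_get sL 0 idx, hidx])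
  rw [Finset.sum_congr rfl step_k, Finset.sum_comm]
  apply Finset.sum_congr rfl
  intro m _
  have hiffc : ∀ k ∈ Finset.range ℓ,
      (if sL.getD m 0 ≤ sY.getD k 0 then (sL.getD m 0 - sL.getD (m+1) 0) else 0)
      = (sL.getD m 0 - sL.getD (m+1) 0) * (if k < sY.countP (fun x => decide (sL.getD m 0 ≤ x)) then (1:ℝ) else 0) := by
    intro k hk
    rw [if_congr (sorted_le_getD_iff sY hsortY k (lt_of_lt_of_le (Finset.mem_range.1 hk) hℓ) _)
      rfl rfl, mul_ite, mul_one, mul_zero]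
  rw [Finset.sum_congr rfl hiffc, ← Finset.mul_sum, sum_ind_min]
lemma mergeSort_pairwise (l : List ℝ) :
    (l.mergeSort (fun a b => decide (b ≤ a))).Pairwise (fun x y : ℝ => y ≤ x) := by
  have := List.pairwise_mergeSort (le := fun a b : ℝ => decide (b ≤ a))
    (fun a b c hab hbc => by
      simp only [decide_eq_true_iff] at *
      exact le_trans hbc hab)
    (fun a b => by
      simp only [Bool.or_eq_true, decide_eq_true_iff]
      exact le_total b a) l
  exact this.imp (fun h => of_decide_eq_true h)

lemma hsplit (n : ℕ) (a : Fin n → Fin n → ℝ) (t : ℝ) :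
    ((Finset.univ : Finset (Fin n × Fin n)).filter (fun p => t ≤ |a p.1 p.2|)).card
      = ∑ i, ((Finset.univ : Finset (Fin n)).filter (fun j => t ≤ |a i j|)).card := by
  rw [Finset.card_filter, Fintype.sum_prod_type]
  exact Finset.sum_congr rfl (fun i _ => (Finset.card_filter _ _).symm)


/-- `kmax x k` is the `k`-th largest entry (1-indexed) of the vector `x`. -/
noncomputable def kmax {n : ℕ} (x : Fin n → ℝ) (k : ℕ) : ℝ :=
  ((List.ofFn x).mergeSort (fun a b => decide (b ≤ a))).getD (k - 1) 0

/-- `smat a k` is the `k`-th largest entry (1-indexed) of `(|a i j|)`. -/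
noncomputable def smat {n N : ℕ} (a : Fin n → Fin N → ℝ) (k : ℕ) : ℝ :=
  (((Finset.univ : Finset (Fin n × Fin N)).toList.map
      (fun p => |a p.1 p.2|)).mergeSort (fun a b => decide (b ≤ a))).getD (k - 1) 0

/-- Example 2: the main theorem for `G` the set of all self-maps of `{1,…,n}`. -/
theorem stmt7 (n ℓ : ℕ) (hℓ : ℓ ≤ n) (a : Fin n → Fin n → ℝ) :
    (1 / 288) * ((1 / n) * ∑ j ∈ Finset.range (ℓ * n), smat a (j + 1))
      ≤ (∑ g : Fin n → Fin n,
          ∑ k ∈ Finset.range ℓ, kmax (fun i => |a i (g i)|) (k + 1)) / ((n : ℝ) ^ n) ∧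
    (∑ g : Fin n → Fin n,
          ∑ k ∈ Finset.range ℓ, kmax (fun i => |a i (g i)|) (k + 1)) / ((n : ℝ) ^ n)
      ≤ 2 * ((1 / n) * ∑ j ∈ Finset.range (ℓ * n), smat a (j + 1)) := by
  rcases Nat.eq_zero_or_pos ℓ with hℓ0 | hℓpos
  · subst hℓ0
    simp
  have hn : 0 < n := lt_of_lt_of_le hℓpos hℓ
  have hnR : (0:ℝ) < n := by exact_mod_cast hn
  have hpow : (0:ℝ) < (n:ℝ)^n := by positivity
  set L : List ℝ := ((Finset.univ : Finset (Fin n × Fin n)).toList.map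
    (fun p => |a p.1 p.2|)) with hL
  set sL : List ℝ := L.mergeSort (fun a b => decide (b ≤ a)) with hsL
  have hperm : sL.Perm L := List.mergeSort_perm L _
  have hsort : sL.Pairwise (fun x y : ℝ => y ≤ x) := mergeSort_pairwise L
  have hlenL : L.length = n*n := by simp [hL]
  have hlen : sL.length = n*n := by rw [hsL, List.length_mergeSort]; exact hlenL
  have hnnL : ∀ x ∈ L, 0 ≤ x := by
    intro x hx
    rw [hL, List.mem_map] at hx
    obtain ⟨p, _, hp⟩ := hx
    rw [← hp]; exact abs_nonneg _
  have hnnsL : ∀ x ∈ sL, 0 ≤ x := fun x hx => hnnL x (hperm.mem_iff.1 hx)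
  have hsmat : ∀ m : ℕ, smat a (m+1) = sL.getD m 0 := fun m => rfl
  set S : ℕ → Fin n → Finset (Fin n) :=
    fun m i => Finset.univ.filter (fun j => sL.getD m 0 ≤ |a i j|) with hS
  set C2 : ℕ → ℕ := fun m => ((Finset.univ : Finset (Fin n × Fin n)).filter
    (fun p => sL.getD m 0 ≤ |a p.1 p.2|)).card with hC2
  have hmu : ∀ m, mu (S m) = ((C2 m : ℕ) : ℝ)/n := by
    intro m
    have h1 : C2 m = ∑ i, (S m i).card := by
      simp only [hC2, hS]
      exact hsplit n a _
    unfold mu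
    rw [h1, Nat.cast_sum]
  have hC2' : ∀ t : ℝ, L.countP (fun x => decide (t ≤ x))
      = ((Finset.univ : Finset (Fin n × Fin n)).filter (fun p => t ≤ |a p.1 p.2|)).card := by
    intro t
    rw [hL, List.countP_map]
    exact countP_toList _ _
  have hcnt2 : ∀ m, sL.countP (fun x => decide (sL.getD m 0 ≤ x)) = C2 m := by
    intro m
    rw [hperm.countP_eq, hC2', hC2]
  have E1 : ∑ j ∈ Finset.range (ℓ*n), smat a (j+1)
      = ∑ m ∈ Finset.range (n*n), (sL.getD m 0 - sL.getD (m+1) 0)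
          * min ((ℓ*n : ℕ):ℝ) ((C2 m : ℕ):ℝ) := by
    have hres := restructure sL hsort hnnsL sL hsort (fun x h => h) (ℓ*n)
      (by rw [hlen]; exact Nat.mul_le_mul_right n hℓ)
    rw [Finset.sum_congr rfl (fun j _ => hsmat j), hres, hlen]
    apply Finset.sum_congr rfl
    intro m _
    rw [hcnt2 m]
  have E2 : ∀ g : Fin n → Fin n, ∑ k ∈ Finset.range ℓ, kmax (fun i => |a i (g i)|) (k+1)
      = ∑ m ∈ Finset.range (n*n), (sL.getD m 0 - sL.getD (m+1) 0)
          * min (ℓ:ℝ) (NN (S m) g) := by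
    intro g
    set sY : List ℝ := (List.ofFn (fun i => |a i (g i)|)).mergeSort
      (fun a b => decide (b ≤ a)) with hsY
    have hpermY : sY.Perm (List.ofFn (fun i => |a i (g i)|)) := List.mergeSort_perm _ _
    have hlenY : sY.length = n := by rw [hsY, List.length_mergeSort, List.length_ofFn]
    have hsubY : ∀ x ∈ sY, x ∈ sL := by
      intro x hx
      have hx2 := hpermY.mem_iff.1 hx
      rw [List.mem_ofFn] at hx2
      obtain ⟨i, hi⟩ := hx2
      apply hperm.mem_iff.2
      rw [hL, List.mem_map]
      exact ⟨(i, g i), Finset.mem_toList.2 (Finset.mem_univ _), hi⟩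
    have hkmax : ∀ k : ℕ, kmax (fun i => |a i (g i)|) (k+1) = sY.getD k 0 := fun k => rfl
    have hres := restructure sL hsort hnnsL sY (mergeSort_pairwise _) hsubY ℓ
      (by rw [hlenY]; exact hℓ)
    rw [Finset.sum_congr rfl (fun k _ => hkmax k), hres, hlen]
    apply Finset.sum_congr rfl
    intro m _
    congr 1
    congr 1
    rw [hpermY.countP_eq, List.ofFn_eq_map, List.countP_map, ← card_filter_univ_fin]
    rw [Finset.card_filter, Nat.cast_sum]
    unfold NN
    apply Finset.sum_congr rfl
    intro i _
    by_cases h : sL.getD m 0 ≤ |a i (g i)| <;> simp [hS, h]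
  have hW : ∀ m, 0 ≤ sL.getD m 0 - sL.getD (m+1) 0 :=
    fun m => sub_nonneg.2 (getD_succ_le sL hsort hnnsL m)
  have hswap : (∑ g : Fin n → Fin n, ∑ k ∈ Finset.range ℓ, kmax (fun i => |a i (g i)|) (k+1))
      = ∑ m ∈ Finset.range (n*n), (sL.getD m 0 - sL.getD (m+1) 0)
          * ∑ g : Fin n → Fin n, min (ℓ:ℝ) (NN (S m) g) := by
    rw [Finset.sum_congr rfl (fun g _ => E2 g), Finset.sum_comm]
    exact Finset.sum_congr rfl (fun m _ => (Finset.mul_sum _ _ _).symm)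
  have hminscale : ∀ m, (1/(n:ℝ)) * min ((ℓ*n : ℕ):ℝ) ((C2 m : ℕ):ℝ)
      = min (ℓ:ℝ) (mu (S m)) := by
    intro m
    rw [hmu m]
    have h0 : (0:ℝ) ≤ 1/(n:ℝ) := by positivity
    rw [mul_min_of_nonneg _ _ h0]
    congr 1
    · push_cast
      field_simp
    · rw [one_div, inv_mul_eq_div]
  have hmin0 : ∀ m, 0 ≤ min (ℓ:ℝ) (mu (S m)) :=
    fun m => le_min (by positivity) (mu_nonneg _)
  constructor
  · rw [le_div_iff₀ hpow]
    calc (1 / 288) * ((1 / (n:ℝ)) * ∑ j ∈ Finset.range (ℓ * n), smat a (j + 1)) * (n:ℝ)^n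
        = ∑ m ∈ Finset.range (n*n), (sL.getD m 0 - sL.getD (m+1) 0)
            * ((1/288) * ((1/(n:ℝ)) * min ((ℓ*n : ℕ):ℝ) ((C2 m : ℕ):ℝ)) * (n:ℝ)^n) := by
          rw [E1, Finset.mul_sum, Finset.mul_sum, Finset.sum_mul]
          exact Finset.sum_congr rfl (fun m _ => by ring)
      _ ≤ ∑ m ∈ Finset.range (n*n), (sL.getD m 0 - sL.getD (m+1) 0)
            * ((1/16) * min (ℓ:ℝ) (mu (S m)) * (n:ℝ)^n) := by
          apply Finset.sum_le_sum
          intro m _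
          apply mul_le_mul_of_nonneg_left _ (hW m)
          rw [hminscale m]
          nlinarith [mul_nonneg (hmin0 m) hpow.le]
      _ ≤ ∑ m ∈ Finset.range (n*n), (sL.getD m 0 - sL.getD (m+1) 0)
            * (∑ g : Fin n → Fin n, min (ℓ:ℝ) (NN (S m) g)) := by
          apply Finset.sum_le_sum
          intro m _
          exact mul_le_mul_of_nonneg_left (core_lower (S m) hn ℓ hℓpos) (hW m)
      _ = _ := hswap.symm
  · rw [div_le_iff₀ hpow]
    calc (∑ g : Fin n → Fin n, ∑ k ∈ Finset.range ℓ, kmax (fun i => |a i (g i)|) (k+1))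
        = ∑ m ∈ Finset.range (n*n), (sL.getD m 0 - sL.getD (m+1) 0)
            * ∑ g : Fin n → Fin n, min (ℓ:ℝ) (NN (S m) g) := hswap
      _ ≤ ∑ m ∈ Finset.range (n*n), (sL.getD m 0 - sL.getD (m+1) 0)
            * (min (ℓ:ℝ) (mu (S m)) * (n:ℝ)^n) := by
          apply Finset.sum_le_sum
          intro m _
          exact mul_le_mul_of_nonneg_left (core_upper (S m) hn ℓ) (hW m)
      _ ≤ ∑ m ∈ Finset.range (n*n), (sL.getD m 0 - sL.getD (m+1) 0)
            * (2 * ((1/(n:ℝ)) * min ((ℓ*n : ℕ):ℝ) ((C2 m : ℕ):ℝ)) * (n:ℝ)^n) := by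
          apply Finset.sum_le_sum
          intro m _
          apply mul_le_mul_of_nonneg_left _ (hW m)
          rw [hminscale m]
          nlinarith [mul_nonneg (hmin0 m) hpow.le]
      _ = 2 * ((1 / (n:ℝ)) * ∑ j ∈ Finset.range (ℓ * n), smat a (j + 1)) * (n:ℝ)^n := by
          rw [E1, Finset.mul_sum, Finset.mul_sum, Finset.sum_mul]
          exact Finset.sum_congr rfl (fun m _ => by ring)
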